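/- arXiv:2207.14188 — 2 statements merged into one kernel-verified Lean document; each statement's English description precedes it below -/
import Mathlib

section
/- For all positive integers r, m, there exist polynomials F_{2m-1} and F_{2m} in one variable of degree m−1 with rational coefficients such that for all n ≥ 1, S_{2m-1}^{(r)}(n) = S_1^{(r)}(n) · F_{2m-1}(n(n+r)) and S_{2m}^{(r)}(n) = S_2^{(r)}(n) · F_{2m}(n(n+r)). -/
/-- Hyper-sum of powers of integers: `S m 0 n = n^m` and
`S m (r+1) n = ∑ i in [1..n], S m r i`. -/
def S (m : ℕ) : ℕ → ℕ → ℚ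
  | 0, n => (n : ℚ) ^ m
  | r + 1, n => ∑ i ∈ Finset.Icc 1 n, S m r i

open Polynomial Finset

noncomputable def bernPoly (p : ℕ) : ℚ[X] :=
  ∑ i ∈ range (p + 1), C (_root_.bernoulli i * ((p + 1).choose i) / (p + 1)) * X ^ (p + 1 - i)

lemma bernPoly_eval (p n : ℕ) :
    (bernPoly p).eval (n : ℚ) = ∑ k ∈ range n, (k : ℚ) ^ p := by
  rw [sum_range_pow, bernPoly, eval_finset_sum]
  refine Finset.sum_congr rfl fun i _ => ?_
  simp only [eval_mul, eval_C, eval_pow, eval_X]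
  ring

noncomputable def Sp (p : ℕ) : ℚ[X] :=
  (bernPoly p).comp (X + 1) - C (if p = 0 then 1 else 0)

lemma Sp_eval (p n : ℕ) :
    (Sp p).eval (n : ℚ) = ∑ i ∈ Finset.Icc 1 n, (i : ℚ) ^ p := by
  have h1 : ((n : ℚ) + 1) = ((n + 1 : ℕ) : ℚ) := by push_cast; ring
  have h2 : Finset.range (n + 1) = insert 0 (Finset.Icc 1 n) := by
    ext x
    simp [Nat.lt_succ_iff, Nat.one_le_iff_ne_zero]
    omega
  rw [Sp, eval_sub, eval_comp]
  simp only [eval_add, eval_X, eval_one, h1, bernPoly_eval, h2, eval_C]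
  rw [Finset.sum_insert (by simp)]
  rcases Nat.eq_zero_or_pos p with hp | hp
  · subst hp; simp
  · simp [Nat.pos_iff_ne_zero.mp hp, zero_pow (Nat.pos_iff_ne_zero.mp hp)]

noncomputable def sumPoly (P : ℚ[X]) : ℚ[X] :=
  ∑ p ∈ range (P.natDegree + 1), C (P.coeff p) * Sp p

lemma sumPoly_eval (P : ℚ[X]) (n : ℕ) :
    (sumPoly P).eval (n : ℚ) = ∑ i ∈ Finset.Icc 1 n, P.eval (i : ℚ) := by
  rw [sumPoly, eval_finset_sum]
  simp only [eval_mul, eval_C, Sp_eval, Finset.mul_sum]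
  rw [Finset.sum_comm]
  refine Finset.sum_congr rfl fun i _ => ?_
  rw [eval_eq_sum_range]
noncomputable def Pm (m : ℕ) : ℕ → ℚ[X]
  | 0 => X ^ m
  | r + 1 => sumPoly (Pm m r)

lemma Pm_eval (m r n : ℕ) : (Pm m r).eval (n : ℚ) = S m r n := by
  induction r generalizing n with
  | zero => simp [Pm, S]
  | succ r ih =>
    rw [Pm, sumPoly_eval, S]
    exact Finset.sum_congr rfl fun i _ => ih i

lemma S_one' (m r : ℕ) : S m r 1 = 1 := by
  induction r with
  | zero => simp [S]
  | succ r ih => simp [S, ih]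

lemma Pm_ne_zero (m r : ℕ) : Pm m r ≠ 0 := by
  intro h
  have := Pm_eval m r 1
  rw [h] at this
  simp [S_one'] at this

-- infinite set of naturals in ℚ
lemma nat_infinite : Set.Infinite {x : ℚ | ∃ n : ℕ, (n : ℚ) = x} := by
  apply Set.infinite_of_injective_forall_mem (f := fun n : ℕ => (n : ℚ))
    (hi := Nat.cast_injective)
  exact fun n => ⟨n, rfl⟩

lemma poly_eq_of_nat_eval {P Q : ℚ[X]} (h : ∀ n : ℕ, P.eval (n : ℚ) = Q.eval (n : ℚ)) :
    P = Q := by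
  have : P - Q = 0 := by
    apply Polynomial.eq_zero_of_infinite_isRoot
    apply Set.Infinite.mono _ nat_infinite
    rintro x ⟨n, rfl⟩
    simp [IsRoot.def, h n]
  exact sub_eq_zero.mp this

lemma Pm_delta (m r : ℕ) :
    (Pm m (r + 1)).comp (X + C 1) = Pm m (r + 1) + (Pm m r).comp (X + C 1) := by
  apply poly_eq_of_nat_eval
  intro n
  have h1 : ((n : ℚ) + 1) = ((n + 1 : ℕ) : ℚ) := by push_cast; ring
  simp only [eval_add, eval_comp, eval_X, eval_C, h1, Pm_eval]
  show S m (r+1) (n+1) = S m (r+1) n + S m r (n+1)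
  rw [S, Finset.sum_Icc_succ_top (by omega)]
  rw [show (∑ i ∈ Finset.Icc 1 n, S m r i) = S m (r+1) n from rfl]
lemma Pm_eval_neg (m : ℕ) (hm : 1 ≤ m) (r : ℕ) :
    ∀ j ≤ r, (Pm m r).eval (-(j : ℚ)) = 0 := by
  induction r with
  | zero =>
    intro j hj
    interval_cases j
    simp [Pm, zero_pow (by omega : m ≠ 0)]
  | succ r ih =>
    have h0 : (Pm m (r+1)).eval ((0:ℕ) : ℚ) = 0 := by
      rw [Pm_eval]; rw [S]; simp
    have hstep : ∀ x : ℚ, (Pm m (r+1)).eval (x + 1) =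
        (Pm m (r+1)).eval x + (Pm m r).eval (x + 1) := by
      intro x
      have := congrArg (Polynomial.eval x) (Pm_delta m r)
      simpa [eval_comp] using this
    intro j hj
    induction j with
    | zero => simpa using h0
    | succ j ihj =>
      have hj' : j ≤ r := by omega
      have := hstep (-(j+1 : ℚ))
      have hq : (-(j+1:ℚ) + 1) = -(j:ℚ) := by ring
      rw [hq] at this
      have e1 : (Pm m (r+1)).eval (-(j:ℚ)) = 0 := by
        have := ihj (by omega)
        simpa using this
      have e2 : (Pm m r).eval (-(j:ℚ)) = 0 := ih j hj'
      rw [e1, e2] at this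
      have : (Pm m (r+1)).eval (-(j+1:ℚ)) = 0 := by linarith
      simpa [Nat.cast_succ] using this

lemma Pm_symm (m : ℕ) (hm : 1 ≤ m) (r : ℕ) :
    (Pm m r).comp (C (-(r:ℚ)) - X) = C ((-1:ℚ)^(m+r)) * Pm m r := by
  induction r with
  | zero =>
    simp only [Pm, Nat.cast_zero, neg_zero, map_zero, zero_sub, Nat.add_zero]
    rw [pow_comp, X_comp]
    rw [neg_pow, ← C_1, ← C_neg, ← C_pow]
  | succ r ih =>
    set Q := Pm m (r+1) with hQdef
    set P := Pm m r with hPdef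
    set ε : ℚ := (-1)^(m+r+1) with hεdef
    set R : ℚ[X] := C ε * Q.comp (C (-(r+1:ℚ)) - X) with hRdef
    have hcomp1 : ∀ (a : ℚ) (T : ℚ[X]), (T.comp (C a - X)).comp (X + C 1)
        = T.comp (C (a - 1) - X) := by
      intro a T
      rw [comp_assoc]
      congr 1
      simp only [sub_comp, C_comp, X_comp]
      rw [map_sub]
      ring
    have hcomp2 : ∀ (a : ℚ) (T : ℚ[X]), (T.comp (X + C 1)).comp (C a - X)
        = T.comp (C (a + 1) - X) := by
      intro a T
      rw [comp_assoc]
      congr 1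
      simp only [add_comp, C_comp, X_comp]
      rw [map_add]
      ring
    -- composed delta identity
    have hdelta := Pm_delta m r
    have hd2 := congrArg (fun T => T.comp (C (-(r:ℚ) - 2) - X)) hdelta
    rw [hcomp2, add_comp, hcomp2] at hd2
    have hr1 : (-(r:ℚ) - 2 + 1) = -(r+1:ℚ) := by ring
    rw [hr1] at hd2
    -- hd2 : Q.comp (C (-(r+1)) - X) = Q.comp (C (-(r:ℚ)-2) - X) + P.comp (C (-(r+1:ℚ)) - X)
    -- symmetry of P at shifted point
    have hPsym : P.comp (C (-(r+1:ℚ)) - X) = C ((-1:ℚ)^(m+r)) * P.comp (X + C 1) := by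
      have := congrArg (fun T => T.comp (X + C 1)) ih
      rw [hcomp1] at this
      have : P.comp (C (-(r:ℚ) - 1) - X) = C ((-1:ℚ)^(m+r)) * P.comp (X + C 1) := by
        rw [this, mul_comp, C_comp]
      simpa [show (-(r:ℚ) - 1) = -(r+1:ℚ) by ring] using this
    -- R satisfies same recurrence as Q
    have hRdelta : R.comp (X + C 1) = R + P.comp (X + C 1) := by
      rw [hRdef, mul_comp, C_comp, hcomp1]
      have h2 : (-(r+1:ℚ) - 1) = -(r:ℚ) - 2 := by ring
      rw [h2]
      have := hd2
      have hx : Q.comp (C (-(r:ℚ) - 2) - X)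
          = Q.comp (C (-(r+1:ℚ)) - X) - C ((-1:ℚ)^(m+r)) * P.comp (X + C 1) := by
        rw [hd2, hPsym]; ring
      rw [hx]
      have h1 : ((-1:ℚ))^(m+r) * (-1)^(m+r) = 1 := by rw [← mul_pow]; norm_num
      have hsign : ε * (-1:ℚ)^(m+r) = -1 := by
        rw [hεdef, pow_succ]
        calc (-1:ℚ)^(m+r) * -1 * (-1)^(m+r) = ((-1)^(m+r) * (-1)^(m+r)) * -1 := by ring
        _ = -1 := by rw [h1]; ring
      rw [mul_sub, ← mul_assoc, ← C_mul, hsign]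
      simp only [map_neg, C_1, neg_mul, one_mul]
      ring
    -- D := R - Q is zero
    have hD : R = Q := by
      have hQ0 : Q.eval 0 = 0 := by
        have := Pm_eval m (r+1) 0
        rw [show ((0:ℕ):ℚ) = 0 by norm_num] at this
        rw [this]; rw [S]; simp
      have hR0 : R.eval 0 = 0 := by
        rw [hRdef]
        simp only [eval_mul, eval_C, eval_comp, eval_sub, eval_X, eval_C, sub_zero]
        have := Pm_eval_neg m hm (r+1) (r+1) le_rfl
        rw [show (-(((r+1:ℕ)):ℚ)) = -(r+1:ℚ) by push_cast; ring] at this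
        rw [this]; ring
      have hQdelta := Pm_delta m r
      have key : ∀ n : ℕ, R.eval (n:ℚ) = Q.eval (n:ℚ) := by
        intro n
        induction n with
        | zero => simp [hQ0, hR0]
        | succ n ihn =>
          have e1 := congrArg (Polynomial.eval ((n:ℚ))) hRdelta
          have e2 := congrArg (Polynomial.eval ((n:ℚ))) hQdelta
          simp only [eval_comp, eval_add, eval_X, eval_C] at e1 e2
          push_cast
          rw [e1, e2, ihn]
      exact poly_eq_of_nat_eval key
    -- conclude
    have := congrArg (fun T => C ε * T) hD
    rw [hRdef, ← mul_assoc, ← C_mul] at this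
    have hε2 : ε * ε = 1 := by
      rw [hεdef, ← mul_pow]; norm_num
    rw [hε2, C_1, one_mul] at this
    rw [show (-((r:ℚ)+1)) = -(((r+1:ℕ)):ℚ) by push_cast; ring] at this
    rw [this]
    congr 2
lemma delta_natDegree (Q : ℚ[X]) (h : 1 ≤ Q.natDegree) :
    (Q.comp (X + C 1) - Q).natDegree = Q.natDegree - 1 := by
  set d := Q.natDegree with hd
  have hQ0 : Q ≠ 0 := by
    intro h0; rw [h0] at hd; simp at hd; omega
  have htay : Q.comp (X + C 1) = Polynomial.taylor 1 Q := (taylor_apply 1 Q).symm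
  have hdeg_tay : (Polynomial.taylor (1:ℚ) Q).natDegree = d := natDegree_taylor Q 1
  -- coeff d of taylor is Q.coeff d
  have hcd : (Polynomial.taylor (1:ℚ) Q).coeff d = Q.coeff d := by
    rw [taylor_coeff]
    have h1 : (Polynomial.hasseDeriv d Q).natDegree ≤ 0 := by
      have := Polynomial.natDegree_hasseDeriv_le Q d
      omega
    have h2 : Polynomial.hasseDeriv d Q = C ((Polynomial.hasseDeriv d Q).coeff 0) :=
      Polynomial.eq_C_of_natDegree_le_zero h1
    rw [h2, eval_C, Polynomial.hasseDeriv_coeff]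
    simp
  -- coeff (d-1)
  have hcd1 : (Polynomial.taylor (1:ℚ) Q).coeff (d-1) = Q.coeff (d-1) + d * Q.coeff d := by
    rw [taylor_coeff]
    have h1 : (Polynomial.hasseDeriv (d-1) Q).natDegree < 2 := by
      have := Polynomial.natDegree_hasseDeriv_le Q (d-1)
      omega
    rw [Polynomial.eval_eq_sum_range' h1]
    rw [Finset.sum_range_succ, Finset.sum_range_one]
    simp only [pow_zero, mul_one, pow_one, Polynomial.hasseDeriv_coeff]
    have e0 : (0 + (d-1)).choose (d-1) = 1 := by simp
    have e1 : (1 + (d-1)) = d := by omega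
    have e2 : d.choose (d-1) = d := by
      have h3 : d - (d-1) = 1 := by omega
      have := Nat.choose_symm (show d - 1 ≤ d by omega)
      rw [h3] at this
      rw [← this, Nat.choose_one_right]
    rw [e0, e1, e2]
    push_cast
    ring
  set D := Q.comp (X + C 1) - Q with hD
  have hcoeffD : ∀ N, d ≤ N → N ≠ d - 1 → D.coeff N = 0 := by
    intro N hN _
    rw [hD, Polynomial.coeff_sub, htay]
    rcases eq_or_lt_of_le hN with rfl | hlt
    · rw [hcd]; ring
    · rw [Polynomial.coeff_eq_zero_of_natDegree_lt (by omega),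
        Polynomial.coeff_eq_zero_of_natDegree_lt (by omega)]
      ring
  have hle : D.natDegree ≤ d - 1 := by
    apply Polynomial.natDegree_le_iff_coeff_eq_zero.mpr
    intro N hNlt
    exact hcoeffD N (by omega) (by omega)
  have hne : D.coeff (d-1) ≠ 0 := by
    rw [hD, Polynomial.coeff_sub, htay, hcd1]
    have : Q.coeff d ≠ 0 := by
      rw [hd, Polynomial.coeff_natDegree]
      exact Polynomial.leadingCoeff_ne_zero.mpr hQ0
    have hd0 : (d:ℚ) ≠ 0 := by
      simp only [ne_eq, Nat.cast_eq_zero]; omega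
    intro hcontr
    apply this
    have : (d:ℚ) * Q.coeff d = 0 := by linarith
    exact (mul_eq_zero.mp this).resolve_left hd0
  exact le_antisymm hle (Polynomial.le_natDegree_of_ne_zero hne)

lemma Pm_natDegree (m : ℕ) (hm : 1 ≤ m) (r : ℕ) : (Pm m r).natDegree = m + r := by
  induction r with
  | zero => simp [Pm]
  | succ r ih =>
    have hdelta := Pm_delta m r
    have hEq : (Pm m (r+1)).comp (X + C 1) - Pm m (r+1) = (Pm m r).comp (X + C 1) := by
      rw [hdelta]; ring
    have hRHSne : (Pm m r).comp (X + C 1) ≠ 0 := by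
      intro h0
      have := congrArg (fun T => T.comp (X - C 1)) h0
      simp only [zero_comp, comp_assoc] at this
      have hXX : (X + C (1:ℚ)).comp (X - C 1) = X := by
        simp only [add_comp, X_comp, C_comp]
        ring
      rw [hXX, comp_X] at this
      exact Pm_ne_zero m r this
    have hRHSdeg : ((Pm m r).comp (X + C 1)).natDegree = m + r := by
      rw [natDegree_comp, ih, natDegree_X_add_C, mul_one]
    have hQ1 : 1 ≤ (Pm m (r+1)).natDegree := by
      by_contra hc
      push_neg at hc
      have h0 : (Pm m (r+1)).natDegree = 0 := by omega
      have := Polynomial.eq_C_of_natDegree_le_zero (le_of_eq h0)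
      rw [this] at hEq
      simp only [C_comp, sub_self] at hEq
      exact hRHSne hEq.symm
    have := delta_natDegree (Pm m (r+1)) hQ1
    rw [hEq, hRHSdeg] at this
    omega
lemma prod_dvd_of_roots (s : Finset ℚ) :
    ∀ (p : ℚ[X]), (∀ a ∈ s, p.eval a = 0) → (∏ a ∈ s, (X - C a)) ∣ p := by
  induction s using Finset.induction_on with
  | empty => intro p _; simp
  | @insert a s ha ih =>
    intro p hp
    have h1 : (X - C a) ∣ p := dvd_iff_isRoot.mpr (hp a (Finset.mem_insert_self a s))
    obtain ⟨q, hq⟩ := h1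
    have h2 : ∀ b ∈ s, q.eval b = 0 := by
      intro b hb
      have hba : b ≠ a := fun h => ha (h ▸ hb)
      have := hp b (Finset.mem_insert_of_mem hb)
      rw [hq] at this
      simp only [eval_mul, eval_sub, eval_X, eval_C] at this
      rcases mul_eq_zero.mp this with h | h
      · exact absurd (by linarith : b = a) hba
      · exact h
    obtain ⟨t, ht⟩ := ih q h2
    refine ⟨t, ?_⟩
    rw [Finset.prod_insert ha, hq, ht]
    ring

lemma symm_comp (c : ℚ) (G : ℚ[X]) (hG : G.comp (C c - X) = G) :
    ∃ F : ℚ[X], G = F.comp (X^2 - C c * X) ∧ F.natDegree * 2 = G.natDegree := by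
  set u : ℚ[X] := X^2 - C c * X with hu
  have hufact : u = X * (X - C c) := by ring
  have humonic : u.Monic := by rw [hufact]; exact monic_X.mul (monic_X_sub_C c)
  have hudeg : u.natDegree = 2 := by
    rw [hufact, natDegree_mul X_ne_zero (X_sub_C_ne_zero c), natDegree_X, natDegree_X_sub_C]
  have husymm : u.comp (C c - X) = u := by
    rw [hu]
    simp only [sub_comp, pow_comp, mul_comp, C_comp, X_comp]
    ring
  generalize hn : G.natDegree = n
  induction n using Nat.strong_induction_on generalizing G with
  | _ n ih =>
    rcases Nat.eq_zero_or_pos n with rfl | hn1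
    · refine ⟨C (G.coeff 0), ?_, by simp⟩
      rw [C_comp]
      exact Polynomial.eq_C_of_natDegree_le_zero (le_of_eq hn)
    · have hG0 : G ≠ 0 := fun h => by rw [h] at hn; simp at hn; omega
      -- n is even
      have hlc : G.leadingCoeff * (-1)^n = G.leadingCoeff := by
        have h1 : natDegree (C c - X) ≠ 0 := by
          rw [show C c - X = -(X - C c) by ring, natDegree_neg, natDegree_X_sub_C]; omega
        have := leadingCoeff_comp (p := G) h1
        rw [hG] at this
        have h2 : (C c - X).leadingCoeff = -1 := by
          rw [show C c - X = -(X - C c) by ring, leadingCoeff_neg, leadingCoeff_X_sub_C]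
        rw [h2, hn] at this
        exact this.symm
      have hne : G.leadingCoeff ≠ 0 := leadingCoeff_ne_zero.mpr hG0
      have heven : n % 2 = 0 := by
        rcases Nat.even_or_odd n with he | ho
        · exact Nat.even_iff.mp he
        · exfalso
          rw [ho.neg_one_pow] at hlc
          apply hne
          linarith
      obtain ⟨k, hk0⟩ := Nat.even_iff.mpr heven
      have hk : n = 2 * k := by omega
      have hk1 : 1 ≤ k := by omega
      have hukmonic : (u^k).Monic := humonic.pow k
      have hukdeg : (u^k).natDegree = n := by
        rw [humonic.natDegree_pow, hudeg]; omega
      set G' : ℚ[X] := G - C G.leadingCoeff * u^k with hG'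
      have hcoeffn : G'.coeff n = 0 := by
        rw [hG', Polynomial.coeff_sub, coeff_C_mul, ← hukdeg, Polynomial.coeff_natDegree,
          hukmonic.leadingCoeff, hukdeg]
        rw [← hn, Polynomial.coeff_natDegree]
        ring
      have hG'le : G'.natDegree ≤ n := by
        apply le_trans (Polynomial.natDegree_sub_le _ _)
        rw [hn]
        apply max_le le_rfl
        apply le_trans (natDegree_C_mul_le _ _)
        omega
      have hG'symm : G'.comp (C c - X) = G' := by
        rw [hG', sub_comp, mul_comp, C_comp, pow_comp, husymm, hG]
      rcases eq_or_ne G' 0 with hz | hz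
      · have hGeq : G = C G.leadingCoeff * u^k := by
          have h5 := hz
          rw [hG', sub_eq_zero] at h5
          exact h5
        refine ⟨C G.leadingCoeff * X^k, ?_, ?_⟩
        · rw [mul_comp, C_comp, pow_comp, X_comp]
          exact hGeq
        · rw [natDegree_C_mul_X_pow k _ hne]; omega
      · have hlt : G'.natDegree < n := by
          rcases lt_or_eq_of_le hG'le with h | h
          · exact h
          · exfalso
            apply leadingCoeff_ne_zero.mpr hz
            rw [leadingCoeff, h, hcoeffn]
        obtain ⟨F', hF1, hF2⟩ := ih G'.natDegree hlt G' hG'symm rfl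
        refine ⟨C G.leadingCoeff * X^k + F', ?_, ?_⟩
        · rw [add_comp, mul_comp, C_comp, pow_comp, X_comp, ← hF1, hG']
          ring
        · have hdegF' : F'.natDegree < k := by omega
          rw [natDegree_add_eq_left_of_natDegree_lt
            (by rw [natDegree_C_mul_X_pow k _ hne]; exact hdegF'), natDegree_C_mul_X_pow k _ hne]
          omega
noncomputable def Ar (r : ℕ) : ℚ[X] := ∏ j ∈ Finset.range (r+1), (X - C (-(j:ℚ)))

lemma Ar_monic (r : ℕ) : (Ar r).Monic :=
  monic_prod_of_monic _ _ fun j _ => monic_X_sub_C _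

lemma Ar_ne_zero (r : ℕ) : Ar r ≠ 0 := (Ar_monic r).ne_zero

lemma Ar_natDegree (r : ℕ) : (Ar r).natDegree = r + 1 := by
  rw [Ar, natDegree_prod _ _ fun j _ => X_sub_C_ne_zero _]
  have h1 : ∀ j ∈ Finset.range (r+1), (X - C (-(j:ℚ))).natDegree = 1 :=
    fun j _ => natDegree_X_sub_C _
  rw [Finset.sum_congr rfl h1]
  simp

lemma Ar_dvd (m r : ℕ) (hm : 1 ≤ m) : Ar r ∣ Pm m r := by
  have hinj : ∀ x ∈ Finset.range (r+1), ∀ y ∈ Finset.range (r+1),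
      (-(x:ℚ)) = (-(y:ℚ)) → x = y := by
    intro x _ y _ h
    exact_mod_cast neg_inj.mp h
  have hAr : Ar r = ∏ a ∈ (Finset.range (r+1)).image (fun j : ℕ => -(j:ℚ)), (X - C a) := by
    rw [Finset.prod_image hinj, Ar]
  rw [hAr]
  apply prod_dvd_of_roots
  intro a ha
  obtain ⟨j, hj, rfl⟩ := Finset.mem_image.mp ha
  exact Pm_eval_neg m hm r j (by have := Finset.mem_range.mp hj; omega)

lemma Ar_symm (r : ℕ) :
    (Ar r).comp (C (-(r:ℚ)) - X) = C ((-1:ℚ)^(r+1)) * Ar r := by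
  rw [Ar, Polynomial.prod_comp]
  have step : ∀ j ∈ Finset.range (r+1),
      (X - C (-(j:ℚ))).comp (C (-(r:ℚ)) - X)
        = (-1) * (X - C (-(((r - j : ℕ)):ℚ))) := by
    intro j hj
    have hjle : j ≤ r := by simpa [Nat.lt_succ_iff] using Finset.mem_range.mp hj
    have hc : ((r - j:ℕ):ℚ) = (r:ℚ) - j := by
      push_cast [Nat.cast_sub hjle]
      ring
    simp only [sub_comp, X_comp, neg_comp, C_comp, hc, C_neg, C_sub]
    ring
  rw [Finset.prod_congr rfl step, Finset.prod_mul_distrib, Finset.prod_const,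
    Finset.card_range]
  have hre : (∏ j ∈ Finset.range (r+1), (X - C (-(((r - j : ℕ)):ℚ)))) = Ar r := by
    rw [Ar, ← Finset.prod_range_reflect (fun j => (X - C (-(j:ℚ)))) (r+1)]
    apply Finset.prod_congr rfl
    intro j hj
    congr 2
  rw [hre]
  congr 1
  rw [← C_1, ← C_neg, ← C_pow]

lemma Pm_factor (M r : ℕ) (hM : 1 ≤ M) :
    ∃ G : ℚ[X], Pm M r = Ar r * G ∧ G ≠ 0 ∧ G.natDegree = M - 1 ∧
      G.comp (C (-(r:ℚ)) - X) = C ((-1:ℚ)^(M+1)) * G := by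
  obtain ⟨G, hG⟩ := Ar_dvd M r hM
  have hG0 : G ≠ 0 := by
    intro h
    rw [h, mul_zero] at hG
    exact Pm_ne_zero M r hG
  have hdeg : G.natDegree = M - 1 := by
    have := Pm_natDegree M hM r
    rw [hG, natDegree_mul (Ar_ne_zero r) hG0, Ar_natDegree] at this
    omega
  refine ⟨G, hG, hG0, hdeg, ?_⟩
  have h1 := Pm_symm M hM r
  rw [hG, mul_comp, Ar_symm] at h1
  set ε : ℚ := (-1)^(r+1) with hεdef
  set δ : ℚ := (-1)^(M+r) with hδdef
  have hε : (C ε) * (C ε) = 1 := by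
    rw [← C_mul, hεdef, ← pow_add, show (r+1)+(r+1) = 2*(r+1) by ring, pow_mul]
    norm_num
  have hδ : C ε * C δ = C ((-1:ℚ)^(M+1)) := by
    rw [← C_mul, hεdef, hδdef, ← pow_add]
    congr 1
    rw [show (r+1)+(M+r) = (M+1)+2*r by omega, pow_add, pow_mul]
    norm_num
  have h3 : Ar r * G.comp (C (-(r:ℚ)) - X) = Ar r * (C ((-1:ℚ)^(M+1)) * G) := by
    calc Ar r * G.comp (C (-(r:ℚ)) - X)
        = (C ε * C ε) * (Ar r * G.comp (C (-(r:ℚ)) - X)) := by rw [hε, one_mul]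
      _ = C ε * (C ε * Ar r * G.comp (C (-(r:ℚ)) - X)) := by ring
      _ = C ε * (C δ * (Ar r * G)) := by rw [h1]
      _ = (C ε * C δ) * (Ar r * G) := by ring
      _ = Ar r * (C ((-1:ℚ)^(M+1)) * G) := by rw [hδ]; ring
  exact mul_left_cancel₀ (Ar_ne_zero r) h3

lemma exists_F_odd (m r : ℕ) (hm : 1 ≤ m) :
    ∃ F : ℚ[X], F.natDegree = m - 1 ∧
      Pm (2*m-1) r = Ar r * F.comp (X^2 - C (-(r:ℚ)) * X) := by
  obtain ⟨G, hPG, hG0, hGdeg, hGsym⟩ := Pm_factor (2*m-1) r (by omega)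
  have hsign : ((-1:ℚ))^(2*m-1+1) = 1 := by
    rw [show 2*m-1+1 = 2*m by omega, pow_mul]
    norm_num
  rw [hsign, C_1, one_mul] at hGsym
  obtain ⟨F, hF1, hF2⟩ := symm_comp (-(r:ℚ)) G hGsym
  refine ⟨F, ?_, by rw [hPG, hF1]⟩
  rw [hGdeg] at hF2
  omega

lemma exists_F_even (m r : ℕ) (hm : 1 ≤ m) :
    ∃ F : ℚ[X], F.natDegree = m - 1 ∧
      Pm (2*m) r = Ar r * ((X + C ((r:ℚ)/2)) * F.comp (X^2 - C (-(r:ℚ)) * X)) := by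
  obtain ⟨G, hPG, hG0, hGdeg, hGsym⟩ := Pm_factor (2*m) r (by omega)
  have hsign : ((-1:ℚ))^(2*m+1) = -1 := by
    rw [pow_succ, pow_mul]
    norm_num
  rw [hsign] at hGsym
  have hGsym' : G.comp (C (-(r:ℚ)) - X) = -G := by rw [hGsym]; simp
  -- root at -r/2
  have hroot : G.eval (-(r:ℚ)/2) = 0 := by
    have := congrArg (Polynomial.eval (-(r:ℚ)/2)) hGsym'
    simp only [eval_comp, eval_sub, eval_C, eval_X, eval_neg] at this
    rw [show (-(r:ℚ) - (-(r:ℚ)/2)) = -(r:ℚ)/2 by ring] at this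
    linarith
  obtain ⟨H, hH⟩ := dvd_iff_isRoot.mpr hroot
  have hH0 : H ≠ 0 := by
    intro h
    rw [h, mul_zero] at hH
    exact hG0 hH
  have hHdeg : H.natDegree = 2*m - 2 := by
    have := hGdeg
    rw [hH, natDegree_mul (X_sub_C_ne_zero _) hH0, natDegree_X_sub_C] at this
    omega
  have hlin : (X - C (-(r:ℚ)/2)).comp (C (-(r:ℚ)) - X) = -(X - C (-(r:ℚ)/2)) := by
    simp only [sub_comp, X_comp, C_comp]
    rw [show C (-(r:ℚ)) = C (-(r:ℚ)/2) + C (-(r:ℚ)/2) by rw [← map_add]; norm_num]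
    ring
  have hHsym : H.comp (C (-(r:ℚ)) - X) = H := by
    have h4 : (X - C (-(r:ℚ)/2)) * H.comp (C (-(r:ℚ)) - X)
        = (X - C (-(r:ℚ)/2)) * H := by
      have := hGsym'
      rw [hH, mul_comp, hlin] at this
      have h5 := congrArg (fun T => -T) this
      simp only [neg_neg, neg_mul] at h5
      exact h5
    exact mul_left_cancel₀ (X_sub_C_ne_zero _) h4
  obtain ⟨F, hF1, hF2⟩ := symm_comp (-(r:ℚ)) H hHsym
  refine ⟨F, ?_, ?_⟩
  · rw [hHdeg] at hF2; omega
  · rw [hPG, hH, ← hF1]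
    congr 2
    rw [show C (-(r:ℚ)/2) = -C ((r:ℚ)/2) by rw [← C_neg]; congr 1; ring]
    ring
theorem stmt_10 (r m : ℕ) (hr : 1 ≤ r) (hm : 1 ≤ m) :
    ∃ F₁ F₂ : Polynomial ℚ, F₁.natDegree = m - 1 ∧ F₂.natDegree = m - 1 ∧
      ∀ n : ℕ, 1 ≤ n →
        S (2 * m - 1) r n = S 1 r n * F₁.eval ((n : ℚ) * ((n : ℚ) + r)) ∧
        S (2 * m) r n = S 2 r n * F₂.eval ((n : ℚ) * ((n : ℚ) + r)) := by
  obtain ⟨Fo, hFo_deg, hFo⟩ := exists_F_odd m r hm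
  obtain ⟨Fe, hFe_deg, hFe⟩ := exists_F_even m r hm
  obtain ⟨F1, hF1_deg, hF1⟩ := exists_F_odd 1 r le_rfl
  obtain ⟨F2, hF2_deg, hF2⟩ := exists_F_even 1 r le_rfl
  set u : ℚ[X] := X^2 - C (-(r:ℚ)) * X with hu
  set a : ℚ := F1.coeff 0 with hadef
  set b : ℚ := F2.coeff 0 with hbdef
  have hF1C : F1 = C a := Polynomial.eq_C_of_natDegree_le_zero (by omega)
  have hF2C : F2 = C b := Polynomial.eq_C_of_natDegree_le_zero (by omega)
  have hF1' : Pm 1 r = Ar r * C a := by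
    have := hF1
    rw [hF1C, C_comp] at this
    simpa using this
  have hF2' : Pm 2 r = Ar r * ((X + C ((r:ℚ)/2)) * C b) := by
    have := hF2
    rw [hF2C, C_comp] at this
    simpa using this
  have ha : a ≠ 0 := by
    intro h
    apply Pm_ne_zero 1 r
    rw [hF1', h, map_zero, mul_zero]
  have hb : b ≠ 0 := by
    intro h
    apply Pm_ne_zero 2 r
    rw [hF2', h, map_zero, mul_zero, mul_zero]
  refine ⟨C a⁻¹ * Fo, C b⁻¹ * Fe, ?_, ?_, ?_⟩
  · rw [natDegree_C_mul (inv_ne_zero ha)]; exact hFo_deg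
  · rw [natDegree_C_mul (inv_ne_zero hb)]; exact hFe_deg
  · intro n hn
    have hu_eval : u.eval (n:ℚ) = (n:ℚ) * ((n:ℚ) + r) := by
      rw [hu]
      simp only [eval_sub, eval_mul, eval_pow, eval_X, eval_C]
      ring
    constructor
    · have e1 : S (2*m-1) r n = (Ar r).eval ((n:ℚ)) * Fo.eval ((n:ℚ) * ((n:ℚ) + r)) := by
        rw [← Pm_eval, hFo, eval_mul, eval_comp, hu_eval]
      have e2 : S 1 r n = (Ar r).eval ((n:ℚ)) * a := by
        rw [← Pm_eval, hF1', eval_mul, eval_C]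
      rw [e1, e2, eval_mul, eval_C]
      rw [show (Ar r).eval ((n:ℚ)) * a * (a⁻¹ * Fo.eval ((n:ℚ) * ((n:ℚ) + r)))
          = (a * a⁻¹) * ((Ar r).eval ((n:ℚ)) * Fo.eval ((n:ℚ) * ((n:ℚ) + r))) by ring,
        mul_inv_cancel₀ ha, one_mul]
    · have e3 : S (2*m) r n
          = (Ar r).eval ((n:ℚ)) * (((n:ℚ) + r/2) * Fe.eval ((n:ℚ) * ((n:ℚ) + r))) := by
        rw [← Pm_eval, hFe]
        simp only [eval_mul, eval_add, eval_X, eval_C, eval_comp]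
        rw [hu_eval]
      have e4 : S 2 r n = (Ar r).eval ((n:ℚ)) * (((n:ℚ) + r/2) * b) := by
        rw [← Pm_eval, hF2']
        simp only [eval_mul, eval_add, eval_X, eval_C]
      rw [e3, e4, eval_mul, eval_C]
      rw [show (Ar r).eval ((n:ℚ)) * (((n:ℚ) + r/2) * b) * (b⁻¹ * Fe.eval ((n:ℚ) * ((n:ℚ) + r)))
          = (b * b⁻¹) * ((Ar r).eval ((n:ℚ)) * (((n:ℚ) + r/2) * Fe.eval ((n:ℚ) * ((n:ℚ) + r)))) by ring,
        mul_inv_cancel₀ hb, one_mul]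
end

section
/- For all integers r ≥ 0, m ≥ 1, and n ≥ 1, S_m^{(r)}(n) = S_1^{(r)}(n) · ((−1)^{m-1} / ((r+2)(r+3)···(r+m))) · det H, where H is the (m−1)×(m−1) lower Hessenberg matrix with diagonal entries H_{i,i} = −(i+1)·(n + r/2), superdiagonal entries H_{i,i+1} = r + i + 1, entries H_{i,j} = r · C(i+1, j) · B_{i+1−j} for j < i (with B_k the Bernoulli numbers), and zeros above the superdiagonal. -/
lemma S_zero_eq (m n : ℕ) : S m 0 n = (n:ℚ)^m := rfl
lemma S_succ_eq (m r n : ℕ) : S m (r+1) n = ∑ i ∈ Finset.Icc 1 n, S m r i := rfl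

lemma lemB0 (k n : ℕ) :
    (k+1:ℚ) * S k 1 n
      = S (k+1) 0 n + ∑ j ∈ Finset.Icc 1 k,
          ((k+1).choose j : ℚ) * bernoulli' (k+1-j) * (n:ℚ)^j := by
  have h1 : S k 1 n = ∑ i ∈ Finset.Ico 1 (n+1), (i:ℚ)^k := by
    rw [S_succ_eq, ← Finset.Ico_add_one_right_eq_Icc]; rfl
  rw [h1, sum_Ico_pow, Finset.mul_sum, S_zero_eq]
  have hne : (k+1:ℚ) ≠ 0 := by positivity
  have hmul : ∀ i ∈ Finset.range (k+1),
      (k+1:ℚ) * (bernoulli' i * ((k + 1).choose i) * (n:ℚ)^(k+1-i) / (k+1))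
        = bernoulli' i * ((k + 1).choose i) * (n:ℚ)^(k+1-i) := by
    intro i _; field_simp
  rw [Finset.sum_congr rfl hmul, Finset.sum_range_succ']
  simp only [bernoulli'_zero, Nat.choose_zero_right, Nat.cast_one, one_mul, Nat.sub_zero]
  rw [add_comm]
  congr 1
  rw [← Finset.sum_range_reflect]
  have h2 : ∑ j ∈ Finset.Icc 1 k, ((k+1).choose j : ℚ) * bernoulli' (k+1-j) * (n:ℚ)^j
      = ∑ j ∈ Finset.range k, ((k+1).choose (j+1) : ℚ) * bernoulli' (k-j) * (n:ℚ)^(j+1) := by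
    rw [← Finset.Ico_add_one_right_eq_Icc, Finset.sum_Ico_eq_sum_range]
    apply Finset.sum_congr (by simp)
    intro j hj
    simp only [Finset.mem_range] at hj
    have : 1 + j = j + 1 := by omega
    rw [this]
    have e : k + 1 - (j + 1) = k - j := by omega
    rw [e]
  rw [h2]
  apply Finset.sum_congr rfl
  intro j hj
  simp only [Finset.mem_range] at hj
  have e1 : k - 1 - j + 1 = k - j := by omega
  have e2 : k + 1 - (k - j) = j + 1 := by omega
  have e3 : (k+1).choose (k - j) = (k+1).choose (j+1) := by
    have e : k - j = (k+1) - (j+1) := by omega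
    rw [e, Nat.choose_symm (by omega)]
  rw [e1, e2, e3]
  ring_nf

lemma S_apply_zero (m r : ℕ) (hm : 1 ≤ m) : S m r 0 = 0 := by
  cases r with
  | zero => rw [S_zero_eq]; rw [Nat.cast_zero, zero_pow (by omega)]
  | succ r => simp [S_succ_eq]

lemma S_succ_top (m r n : ℕ) :
    S m (r+1) (n+1) = S m (r+1) n + S m r (n+1) := by
  rw [S_succ_eq, S_succ_eq, Finset.sum_Icc_succ_top (by omega)]

lemma lemB (s k n : ℕ) :
    (k+1:ℚ) * S k (s+1) n
      = S (k+1) s n + ∑ j ∈ Finset.Icc 1 k,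
          ((k+1).choose j : ℚ) * bernoulli' (k+1-j) * S j s n := by
  induction s generalizing n with
  | zero =>
    rw [lemB0]
    congr 1
  | succ s ih =>
    rw [show s+1+1 = (s+1)+1 from rfl, S_succ_eq k (s+1) n, Finset.mul_sum]
    rw [Finset.sum_congr rfl (fun i _ => ih i)]
    rw [Finset.sum_add_distrib, ← S_succ_eq]
    congr 1
    rw [Finset.sum_comm]
    apply Finset.sum_congr rfl
    intro j _
    rw [← Finset.mul_sum, ← S_succ_eq]

lemma lemCsum (k : ℕ) (hk : 1 ≤ k) (X : ℕ → ℚ) :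
    ∑ j ∈ Finset.Icc 1 k, ((k+1).choose j : ℚ) * bernoulli' (k+1-j) * X j
      = (∑ j ∈ Finset.Icc 1 k, ((k+1).choose j : ℚ) * bernoulli (k+1-j) * X j)
        + (k+1:ℚ) * X k := by
  obtain ⟨k, rfl⟩ : ∃ k', k = k' + 1 := ⟨k - 1, by omega⟩
  rw [Finset.sum_Icc_succ_top (by omega), Finset.sum_Icc_succ_top (by omega)]
  have h1 : ∀ j ∈ Finset.Icc 1 k, ((k+1+1).choose j : ℚ) * bernoulli' (k+1+1-j) * X j
      = ((k+1+1).choose j : ℚ) * bernoulli (k+1+1-j) * X j := by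
    intro j hj
    simp only [Finset.mem_Icc] at hj
    rw [bernoulli_eq_bernoulli'_of_ne_one (by omega)]
  rw [Finset.sum_congr rfl h1]
  have e : k+1+1-(k+1) = 1 := by omega
  rw [e, bernoulli'_one, bernoulli_one, Nat.choose_succ_self_right]
  push_cast
  ring

lemma lemC (r k n : ℕ) (hk : 1 ≤ k) :
    (k+1:ℚ) * n * S k r n
      = ((r:ℚ)+k+1) * S (k+1) r n + (r:ℚ) * ∑ j ∈ Finset.Icc 1 k,
          ((k+1).choose j : ℚ) * bernoulli (k+1-j) * S j r n := by
  induction r generalizing n with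
  | zero =>
    rw [S_zero_eq, S_zero_eq, Nat.cast_zero]
    rw [pow_succ]
    ring
  | succ r ihr =>
    induction n with
    | zero =>
      rw [S_apply_zero _ _ hk, S_apply_zero _ _ (by omega)]
      rw [Finset.sum_eq_zero (fun j hj => by
        rw [S_apply_zero _ _ (Finset.mem_Icc.mp hj).1, mul_zero])]
      push_cast; ring
    | succ n ihn =>
      have hB := lemB r k (n+1)
      have hB' := lemCsum k hk (fun j => S j r (n+1))
      have hr := ihr (n+1)
      have t1 := S_succ_top k r n
      have t2 := S_succ_top (k+1) r n
      have tsum : ∑ j ∈ Finset.Icc 1 k, ((k+1).choose j : ℚ) * bernoulli (k+1-j) * S j (r+1) (n+1)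
          = (∑ j ∈ Finset.Icc 1 k, ((k+1).choose j : ℚ) * bernoulli (k+1-j) * S j (r+1) n)
            + ∑ j ∈ Finset.Icc 1 k, ((k+1).choose j : ℚ) * bernoulli (k+1-j) * S j r (n+1) := by
        rw [← Finset.sum_add_distrib]
        apply Finset.sum_congr rfl
        intro j _
        rw [S_succ_top]; ring
      have tsum' : ∑ j ∈ Finset.Icc 1 k, ((k+1).choose j : ℚ) * bernoulli' (k+1-j) * S j (r+1) (n+1)
          = (∑ j ∈ Finset.Icc 1 k, ((k+1).choose j : ℚ) * bernoulli' (k+1-j) * S j (r+1) n)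
            + ∑ j ∈ Finset.Icc 1 k, ((k+1).choose j : ℚ) * bernoulli' (k+1-j) * S j r (n+1) := by
        rw [← Finset.sum_add_distrib]
        apply Finset.sum_congr rfl
        intro j _
        rw [S_succ_top]; ring
      push_cast [Nat.cast_succ] at *
      linear_combination (((k:ℚ)+1)*((n:ℚ)+1) - ((k:ℚ)+1))*t1 - ((r:ℚ)+(k:ℚ)+2)*t2
        - ((r:ℚ)+1)*tsum + ihn + hr + hB + hB'

lemma lowpart (r n i : ℕ) :
    (r:ℚ) * ∑ j ∈ Finset.range i, (((i+2).choose (j+1)):ℚ) * bernoulli (i+1-j) * S (j+1) r n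
      = ((i:ℚ)+2)*(n:ℚ)*S (i+1) r n - ((r:ℚ)+(i:ℚ)+2)*S (i+2) r n
        + ((i:ℚ)+2)*((r:ℚ)/2)*S (i+1) r n := by
  have hC := lemC r (i+1) n (by omega)
  push_cast at hC
  have hshift : ∑ j ∈ Finset.Icc 1 (i+1), (((i+1+1).choose j):ℚ) * bernoulli (i+1+1-j) * S j r n
      = ∑ j ∈ Finset.range (i+1), (((i+2).choose (j+1)):ℚ) * bernoulli (i+1-j) * S (j+1) r n := by
    rw [← Finset.Ico_add_one_right_eq_Icc, Finset.sum_Ico_eq_sum_range]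
    apply Finset.sum_congr (by simp)
    intro j hj
    simp only [Finset.mem_range] at hj
    have e1 : 1 + j = j + 1 := by omega
    have e2 : i + 1 + 1 - (j+1) = i + 1 - j := by omega
    rw [e1, e2]
  rw [hshift] at hC
  rw [Finset.sum_range_succ] at hC
  have e3 : i + 1 - i = 1 := by omega
  rw [e3, bernoulli_one, Nat.choose_succ_self_right] at hC
  push_cast at hC ⊢
  linear_combination -hC

lemma rowsum (r n N i : ℕ) (hi : i ≤ N) :
    (∑ j ∈ Finset.range (N+1),
      (if j = i then -((i:ℚ)+2)*((n:ℚ)+(r:ℚ)/2)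
       else if j = i+1 then (r:ℚ)+(i:ℚ)+2
       else if j < i then (r:ℚ)*(((i+2).choose (j+1)):ℚ)*bernoulli (i+1-j) else 0)
        * S (j+1) r n)
    = if i = N then -(((r:ℚ))+(N:ℚ)+2)*S (N+2) r n else 0 := by
  rcases Nat.lt_or_ge i N with hlt | hge
  · -- i < N
    rw [if_neg (by omega)]
    have hsub : ∑ j ∈ Finset.range (N+1),
        (if j = i then -((i:ℚ)+2)*((n:ℚ)+(r:ℚ)/2)
         else if j = i+1 then (r:ℚ)+(i:ℚ)+2
         else if j < i then (r:ℚ)*(((i+2).choose (j+1)):ℚ)*bernoulli (i+1-j) else 0)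
          * S (j+1) r n
        = ∑ j ∈ Finset.range (i+2),
        (if j = i then -((i:ℚ)+2)*((n:ℚ)+(r:ℚ)/2)
         else if j = i+1 then (r:ℚ)+(i:ℚ)+2
         else if j < i then (r:ℚ)*(((i+2).choose (j+1)):ℚ)*bernoulli (i+1-j) else 0)
          * S (j+1) r n := by
      symm
      apply Finset.sum_subset
      · intro x hx; simp only [Finset.mem_range] at *; omega
      · intro x hx hx'
        simp only [Finset.mem_range] at hx hx'
        rw [if_neg (by omega), if_neg (by omega), if_neg (by omega), zero_mul]
    rw [hsub, Finset.sum_range_succ, Finset.sum_range_succ]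
    have hrest : ∑ j ∈ Finset.range i,
        (if j = i then -((i:ℚ)+2)*((n:ℚ)+(r:ℚ)/2)
         else if j = i+1 then (r:ℚ)+(i:ℚ)+2
         else if j < i then (r:ℚ)*(((i+2).choose (j+1)):ℚ)*bernoulli (i+1-j) else 0)
          * S (j+1) r n
        = (r:ℚ) * ∑ j ∈ Finset.range i, (((i+2).choose (j+1)):ℚ) * bernoulli (i+1-j) * S (j+1) r n := by
      rw [Finset.mul_sum]
      apply Finset.sum_congr rfl
      intro j hj
      simp only [Finset.mem_range] at hj
      rw [if_neg (by omega), if_neg (by omega), if_pos hj]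
      ring
    rw [hrest, lowpart]
    split_ifs <;> first | omega | ring
  · -- i = N
    have hiN : i = N := by omega
    subst hiN
    rw [if_pos rfl, Finset.sum_range_succ]
    have hrest : ∑ j ∈ Finset.range i,
        (if j = i then -((i:ℚ)+2)*((n:ℚ)+(r:ℚ)/2)
         else if j = i+1 then (r:ℚ)+(i:ℚ)+2
         else if j < i then (r:ℚ)*(((i+2).choose (j+1)):ℚ)*bernoulli (i+1-j) else 0)
          * S (j+1) r n
        = (r:ℚ) * ∑ j ∈ Finset.range i, (((i+2).choose (j+1)):ℚ) * bernoulli (i+1-j) * S (j+1) r n := by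
      rw [Finset.mul_sum]
      apply Finset.sum_congr rfl
      intro j hj
      simp only [Finset.mem_range] at hj
      rw [if_neg (by omega), if_neg (by omega), if_pos hj]
      ring
    rw [hrest, lowpart]
    split_ifs <;> first | omega | ring

lemma main_aux (r n N : ℕ)
    (H : Matrix (Fin (N+1)) (Fin (N+1)) ℚ)
    (hH : ∀ i j : Fin (N+1),
      H i j =
        if (j : ℕ) = (i : ℕ) then -((i : ℚ) + 2) * ((n : ℚ) + (r : ℚ) / 2)
        else if (j : ℕ) = (i : ℕ) + 1 then (r : ℚ) + (i : ℚ) + 2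
        else if (j : ℕ) < (i : ℕ) then
          (r : ℚ) * (((i : ℕ) + 2).choose ((j : ℕ) + 1) : ℚ) * bernoulli ((i : ℕ) + 1 - (j : ℕ))
        else 0) :
    S (N+2) r n = S 1 r n * ((-1 : ℚ) ^ (N+1) / ∏ k ∈ Finset.Icc 2 (N+2), ((r : ℚ) + k))
        * H.det := by
  set v : Fin (N+1) → ℚ := fun j => S ((j:ℕ)+1) r n with hv
  have hmv : H.mulVec v = Pi.single (Fin.last N) (-(((r:ℚ))+(N:ℚ)+2)*S (N+2) r n) := by
    funext i
    have h1 : H.mulVec v i = ∑ j : Fin (N+1), H i j * v j := rfl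
    have h2 : ∑ j : Fin (N+1), H i j * v j = ∑ j : Fin (N+1),
        (if (j:ℕ) = (i:ℕ) then -((i:ℚ)+2)*((n:ℚ)+(r:ℚ)/2)
         else if (j:ℕ) = (i:ℕ)+1 then (r:ℚ)+(i:ℚ)+2
         else if (j:ℕ) < (i:ℕ) then (r:ℚ)*((((i:ℕ)+2).choose ((j:ℕ)+1)):ℚ)*bernoulli ((i:ℕ)+1-(j:ℕ)) else 0)
          * S ((j:ℕ)+1) r n := by
      apply Finset.sum_congr rfl
      intro j _
      rw [hH i j]
    rw [h1, h2]
    rw [Fin.sum_univ_eq_sum_range (fun j =>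
        (if j = (i:ℕ) then -((i:ℚ)+2)*((n:ℚ)+(r:ℚ)/2)
         else if j = (i:ℕ)+1 then (r:ℚ)+(i:ℚ)+2
         else if j < (i:ℕ) then (r:ℚ)*((((i:ℕ)+2).choose (j+1)):ℚ)*bernoulli ((i:ℕ)+1-j) else 0)
          * S (j+1) r n) (N+1)]
    rw [rowsum r n N i (Fin.is_le i)]
    by_cases hi : (i:ℕ) = N
    · have hi' : i = Fin.last N := Fin.ext hi
      rw [if_pos hi, hi', Pi.single_eq_same]
    · rw [if_neg hi, Pi.single_eq_of_ne (fun h => hi (by rw [h]; rfl))]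
  have hadj : (H.adjugate.mulVec (H.mulVec v)) = H.det • v := by
    rw [Matrix.mulVec_mulVec, Matrix.adjugate_mul, Matrix.smul_mulVec, Matrix.one_mulVec]
  have hdet1 : H.det * S 1 r n
      = (-(((r:ℚ))+(N:ℚ)+2)*S (N+2) r n)
        * (H.updateRow (Fin.last N) (Pi.single (0 : Fin (N+1)) (1:ℚ))).det := by
    have h0 := congrFun hadj 0
    rw [hmv, Matrix.mulVec_single] at h0
    simp only [Pi.smul_apply, smul_eq_mul, hv] at h0
    rw [op_smul_eq_mul, Matrix.col_apply] at h0
    rw [Matrix.adjugate_apply] at h0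
    simp only [Fin.val_zero, zero_add] at h0
    linear_combination -h0
  have htri : (H.updateRow (Fin.last N) (Pi.single (0 : Fin (N+1)) (1:ℚ))).det
      = (-1:ℚ)^N * ∏ i : Fin N, ((r:ℚ) + (i:ℚ) + 2) := by
    rw [Matrix.det_succ_row _ (Fin.last N)]
    rw [Finset.sum_eq_single 0]
    · rw [Matrix.updateRow_self]
      simp only [Pi.single_eq_same]
      have hsub : ((H.updateRow (Fin.last N) (Pi.single (0 : Fin (N+1)) (1:ℚ))).submatrix
          (Fin.last N).succAbove (0:Fin (N+1)).succAbove)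
          = fun (i j : Fin N) => H i.castSucc j.succ := by
        funext i j
        rw [Matrix.submatrix_apply, Fin.succAbove_last, Fin.succAbove_zero,
          Matrix.updateRow_ne (Fin.castSucc_lt_last i).ne]
      rw [hsub]
      have hd : Matrix.det (fun (i j : Fin N) => H i.castSucc j.succ)
          = ∏ i : Fin N, ((r:ℚ) + (i:ℚ) + 2) := by
        rw [Matrix.det_of_lowerTriangular (fun (i j : Fin N) => H i.castSucc j.succ)]
        · apply Finset.prod_congr rfl
          intro i _
          rw [hH]
          rw [if_neg (by simp only [Fin.val_succ, Fin.coe_castSucc]; omega),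
            if_pos (by simp only [Fin.val_succ, Fin.coe_castSucc])]
          simp only [Fin.coe_castSucc]
        · intro i j hij
          have hij' : (i:ℕ) < (j:ℕ) := hij
          show H i.castSucc j.succ = 0
          rw [hH]
          rw [if_neg (by simp only [Fin.val_succ, Fin.coe_castSucc]; omega),
            if_neg (by simp only [Fin.val_succ, Fin.coe_castSucc]; omega),
            if_neg (by simp only [Fin.val_succ, Fin.coe_castSucc]; omega)]
      rw [hd]
      simp only [Fin.val_last, Fin.val_zero, add_zero, mul_one]
    · intro j _ hj
      rw [Matrix.updateRow_self, Pi.single_eq_of_ne hj]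
      ring
    · intro h
      exact absurd (Finset.mem_univ 0) h
  have hprod : ∏ k ∈ Finset.Icc 2 (N+2), ((r:ℚ) + k)
      = (∏ i : Fin N, ((r:ℚ) + (i:ℚ) + 2)) * ((r:ℚ) + (N:ℚ) + 2) := by
    rw [Finset.prod_Icc_succ_top (by omega)]
    congr 1
    · rw [Fin.prod_univ_eq_prod_range (fun i => ((r:ℚ) + (i:ℚ) + 2)) N]
      rw [← Finset.Ico_add_one_right_eq_Icc, Finset.prod_Ico_eq_prod_range]
      apply Finset.prod_congr (by congr 1)
      intro i _
      push_cast
      ring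
    · push_cast; ring
  have hpos : (0:ℚ) < ∏ i : Fin N, ((r:ℚ) + (i:ℚ) + 2) := by
    apply Finset.prod_pos
    intro i _
    positivity
  have hne : (∏ i : Fin N, ((r:ℚ) + (i:ℚ) + 2)) ≠ 0 := ne_of_gt hpos
  have hne2 : ((r:ℚ) + (N:ℚ) + 2) ≠ 0 := by positivity
  rw [htri] at hdet1
  rw [hprod]
  have hsq : ((-1:ℚ)^N) * ((-1:ℚ)^N) = 1 := by
    rw [← pow_add, ← two_mul, pow_mul]
    norm_num
  have hre : S 1 r n * ((-1 : ℚ) ^ (N+1) / ((∏ i : Fin N, ((r:ℚ) + (i:ℚ) + 2)) * ((r:ℚ) + (N:ℚ) + 2)))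
        * H.det
      = ((-1 : ℚ) ^ N * (-1) / ((∏ i : Fin N, ((r:ℚ) + (i:ℚ) + 2)) * ((r:ℚ) + (N:ℚ) + 2)))
        * (H.det * S 1 r n) := by
    rw [pow_succ]; ring
  rw [hre, hdet1]
  field_simp
  linear_combination (-(S (N+2) r n)) * hsq

theorem stmt_12 (r m n : ℕ) (hm : 1 ≤ m) (hn : 1 ≤ n)
    (H : Matrix (Fin (m - 1)) (Fin (m - 1)) ℚ)
    (hH : ∀ i j : Fin (m - 1),
      H i j =
        if (j : ℕ) = (i : ℕ) then -((i : ℚ) + 2) * ((n : ℚ) + (r : ℚ) / 2)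
        else if (j : ℕ) = (i : ℕ) + 1 then (r : ℚ) + (i : ℚ) + 2
        else if (j : ℕ) < (i : ℕ) then
          (r : ℚ) * (((i : ℕ) + 2).choose ((j : ℕ) + 1) : ℚ) * bernoulli ((i : ℕ) + 1 - (j : ℕ))
        else 0) :
    S m r n = S 1 r n * ((-1 : ℚ) ^ (m - 1) / ∏ k ∈ Finset.Icc 2 m, ((r : ℚ) + k))
        * H.det := by
  rcases Nat.lt_or_ge m 2 with hm2 | hm2
  · have hm1 : m = 1 := by omega
    subst hm1
    haveI : IsEmpty (Fin (1-1)) := inferInstanceAs (IsEmpty (Fin 0))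
    have hdet : H.det = 1 := Matrix.det_isEmpty
    have he : Finset.Icc 2 1 = (∅ : Finset ℕ) := by decide
    rw [hdet, he]
    norm_num
  · obtain ⟨N, rfl⟩ : ∃ N, m = N + 2 := ⟨m - 2, by omega⟩
    exact main_aux r n N H hH
end
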